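/- Let G be a finite simple graph with positive vertex weights w, let k ≥ 0 be an integer, and let F ⊆ V(G) be nonempty. Let v be a degree-1 vertex of G with unique neighbor u, and suppose F ≠ {v}. Define w' on V(G−v) by w'(u) = w(u) + w(v) and w'(x) = w(x) for x ≠ u, and define F' = (F \ {v}) ∪ {u} if v ∈ F and F' = F otherwise. Then secl_G^{k}(F) is nonempty if and only if secl_{G−v}^{k}(F') is nonempty, and in that case the maximum w-weight over secl_G^{k}(F) equals the maximum w'-weight over secl_{G−v}^{k}(F'). -/

import Mathlib

namespace Secluded

open SimpleGraph

variable {V : Type*}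

/-- The open neighborhood of a vertex set `S`: vertices outside `S` with a neighbor in `S`. -/
def openNbhd (G : SimpleGraph V) (S : Set V) : Set V :=
  {v | v ∉ S ∧ ∃ u ∈ S, G.Adj v u}

/-- The graph obtained from `G` by deleting the vertices in `D`
(kept on the same vertex type; deleted vertices become isolated). -/
def gdelete (G : SimpleGraph V) (D : Set V) : SimpleGraph V where
  Adj x y := G.Adj x y ∧ x ∉ D ∧ y ∉ D
  symm := ⟨fun _ _ h => ⟨h.1.symm, h.2.2, h.2.1⟩⟩
  loopless := ⟨fun _ h => G.irrefl h.1⟩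

/-- `S` induces a tree (connected and acyclic induced subgraph) in `G`. -/
def IsInducedTree (G : SimpleGraph V) (S : Set V) : Prop :=
  (G.induce S).IsTree

/-- `S` is a `k`-secluded tree in `G`. -/
def IsSecludedTree (G : SimpleGraph V) (k : ℕ) (S : Set V) : Prop :=
  IsInducedTree G S ∧ (openNbhd G S).ncard ≤ k

/-- The set of `k`-secluded supertrees of `F` in `G`. -/
def secl (G : SimpleGraph V) (k : ℕ) (F : Set V) : Set (Set V) :=
  {S | IsSecludedTree G k S ∧ F ⊆ S}

/-- Total weight of a vertex set. -/
noncomputable def weight (w : V → ℕ) (S : Set V) : ℕ := ∑ᶠ x ∈ S, w x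

/-- The maximum-weight elements of a collection of vertex sets. -/
def maxset (w : V → ℕ) (X : Set (Set V)) : Set (Set V) :=
  {S | S ∈ X ∧ ∀ S' ∈ X, weight w S' ≤ weight w S}

/-- `S` consists of exactly one vertex from each member of `𝒳`. -/
def IsTransversal (𝒳 : Set (Set V)) (S : Set V) : Prop :=
  S ⊆ ⋃₀ 𝒳 ∧ ∀ X ∈ 𝒳, (S ∩ X).ncard = 1

/-- The vertex set of the connected component of `G − S` containing `r`. -/
def component (G : SimpleGraph V) (S : Set V) (r : V) : Set V :=
  {x | (gdelete G S).Reachable r x}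

/-- `(r, 𝒳)` is a description for `G`. -/
def IsDescription (G : SimpleGraph V) (r : V) (𝒳 : Set (Set V)) : Prop :=
  (∀ X ∈ 𝒳, r ∉ X) ∧ 𝒳.Pairwise Disjoint ∧
    ∀ S : Set V, IsTransversal 𝒳 S →
      (G.induce (component G S r)).IsAcyclic ∧ openNbhd G (component G S r) = S

/-- The induced tree (given by its vertex set `C`) is described by the description `D`. -/
def Describes (G : SimpleGraph V) (D : V × Set (Set V)) (C : Set V) : Prop :=
  D.1 ∈ C ∧ IsTransversal D.2 (openNbhd G C)

/-- `𝒯_G(𝔛)`: the set of induced trees of `G` described by some member of `𝔛`. -/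
def treesOf (G : SimpleGraph V) (𝔛 : Set (V × Set (Set V))) : Set (Set V) :=
  {C | IsInducedTree G C ∧ ∃ D ∈ 𝔛, Describes G D C}

/-- No induced tree of `G` is described by two distinct members of `𝔛`. -/
def NonRedundant (G : SimpleGraph V) (𝔛 : Set (V × Set (Set V))) : Prop :=
  ∀ C : Set V, IsInducedTree G C → ∀ D₁ ∈ 𝔛, ∀ D₂ ∈ 𝔛,
    Describes G D₁ C → Describes G D₂ C → D₁ = D₂

/-- Degree of a vertex. -/
noncomputable def degOf (G : SimpleGraph V) (v : V) : ℕ := (G.neighborSet v).ncard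


section Helpers

variable {W : Type*} {H : SimpleGraph W}

/-- In a graph, if `a` has at most the single potential neighbor `b`, then no cycle
passes through `a`. -/
lemma no_cycle_through {a b : W} (hab : ∀ z, H.Adj a z → z = b)
    {c : H.Walk a a} (hc : c.IsCycle) : False := by
  cases c with
  | nil => exact hc.ne_nil rfl
  | cons h q =>
    rename_i z
    have hz : z = b := hab z h
    have hq : q.IsPath := ((Walk.cons_isCycle_iff q h).mp hc).1
    have hlen : 2 ≤ q.length := by
      have := hc.three_le_length
      simp only [Walk.length_cons] at this
      omega
    -- last dart of q
    have hqd : q.darts ≠ [] := by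
      intro hnil
      have : q.length = 0 := by
        have := congrArg List.length hnil
        simpa [Walk.length_darts] using this
      omega
    set d := q.darts.getLast hqd with hd
    have hdsnd : d.snd = a := by rw [hd, Walk.getLast_darts_eq_lastDart]; rfl
    have hdfst : d.fst = b := by
      have : H.Adj d.fst d.snd := d.adj
      rw [hdsnd] at this
      exact hab _ this.symm
    -- `d.fst` is the last entry of `q.support.dropLast`
    have hmapfst : q.darts.map (·.fst) = q.support.dropLast := q.map_fst_darts
    have hmapne : q.darts.map (·.fst) ≠ [] := by simpa using hqd
    have hdlne : q.support.dropLast ≠ [] := hmapfst ▸ hmapne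
    have hlast : (q.support.dropLast).getLast hdlne = b := by
      rw [← List.getLast_congr hmapne hdlne hmapfst, List.getLast_map]
      exact hdfst
    -- support of q is b :: tail, with tail containing b again
    obtain ⟨t, ht⟩ : ∃ t, q.support = b :: t :=
      ⟨q.support.tail, by rw [← hz]; exact q.support_eq_cons⟩
    have htlen : 2 ≤ t.length := by
      have := q.length_support
      rw [ht] at this
      simp at this
      omega
    have htne : t.dropLast ≠ [] := by
      have : t.dropLast.length = t.length - 1 := t.length_dropLast
      intro h0
      rw [h0] at this
      simp at this
      omega
    have hdl : q.support.dropLast = b :: t.dropLast := by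
      rw [ht]
      exact List.dropLast_cons_of_ne_nil (by intro h0; rw [h0] at htlen; simp at htlen)
    have hbt : b ∈ t := by
      have h1 : (q.support.dropLast).getLast hdlne = t.dropLast.getLast htne := by
        rw [List.getLast_congr hdlne (List.cons_ne_nil _ _) hdl]
        exact List.getLast_cons htne
      have : b ∈ t.dropLast := by
        rw [← hlast, h1]
        exact List.getLast_mem htne
      exact List.dropLast_subset t this
    have : q.support.Nodup := hq.support_nodup
    rw [ht] at this
    exact (List.nodup_cons.mp this).1 hbt

/-- A path between two vertices different from `a`, where `a` has at most the single
potential neighbor `b`, avoids `a`. -/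
lemma path_avoids {a b x y : W} (hab : ∀ z, H.Adj a z → z = b)
    {p : H.Walk x y} (hp : p.IsPath) (hx : x ≠ a) (hy : y ≠ a) : a ∉ p.support := by
  classical
  intro hmem
  set p₁ := p.takeUntil a hmem with hp₁
  set p₂ := p.dropUntil a hmem with hp₂
  have hspec : p₁.append p₂ = p := p.take_spec hmem
  have hp₁path : p₁.IsPath := hp.takeUntil hmem
  have hp₂path : p₂.IsPath := hp.dropUntil hmem
  -- b is in the support of p₁ (as the penultimate vertex)
  have hp₁d : p₁.darts ≠ [] := by
    intro hnil
    have hlen : p₁.length = 0 := by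
      have := congrArg List.length hnil
      simpa [Walk.length_darts] using this
    have := p₁.eq_of_length_eq_zero hlen
    exact hx this
  set d := p₁.darts.getLast hp₁d with hd
  have hdsnd : d.snd = a := by rw [hd, Walk.getLast_darts_eq_lastDart]; rfl
  have hdfst : d.fst = b := by
    have : H.Adj d.fst d.snd := d.adj
    rw [hdsnd] at this
    exact hab _ this.symm
  have hb₁ : b ∈ p₁.support := by
    rw [← hdfst]
    exact Walk.dart_fst_mem_support_of_mem_darts _ (List.getLast_mem hp₁d)
  -- b is in the tail of the support of p₂
  have hb₂ : b ∈ p₂.support.tail := by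
    clear_value p₂
    clear hp₂ hspec hp₂path
    cases p₂ with
    | nil => exact absurd rfl hy
    | cons hadj q =>
      rename_i z
      have hz : z = b := hab z hadj
      subst hz
      simp
  -- contradiction with nodup of p.support
  have hnd : p.support.Nodup := hp.support_nodup
  rw [← hspec, Walk.support_append] at hnd
  have := List.disjoint_of_nodup_append hnd
  exact this hb₁ hb₂

variable {G : SimpleGraph V}

/-- Restrict a walk in `G.induce t` whose support lies in `s ⊆ t` to a walk in `G.induce s`. -/
lemma walk_restrict {s t : Set V} (hst : s ≤ t) {x y : ↥t}
    (p : (G.induce t).Walk x y) (hsup : ∀ z ∈ p.support, (z : V) ∈ s)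
    (hx : (x : V) ∈ s) (hy : (y : V) ∈ s) :
    ∃ q : (G.induce s).Walk ⟨x, hx⟩ ⟨y, hy⟩,
      q.map (G.induceHomOfLE hst).toHom = p := by
  induction p with
  | nil => exact ⟨Walk.nil, rfl⟩
  | @cons x' z y' h p ih =>
    have hz : (z : V) ∈ s := hsup z (by simp)
    obtain ⟨q, hq⟩ := ih (fun w hw => hsup w (by simp [hw])) hz hy
    refine ⟨Walk.cons (by exact h) q, ?_⟩
    subst hq; rfl

lemma acyclic_induce_mono {s t : Set V} (hst : s ≤ t)
    (hac : (G.induce t).IsAcyclic) : (G.induce s).IsAcyclic := by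
  intro a c hc
  exact hac (c.map (G.induceHomOfLE hst).toHom)
    (hc.map (G.induceHomOfLE hst).injective)

lemma exists_adj_of_reachable {W : Type*} {H : SimpleGraph W} {x y : W} (hxy : x ≠ y)
    (h : H.Reachable x y) : ∃ z, H.Adj x z := by
  obtain ⟨p⟩ := h
  cases p with
  | nil => exact absurd rfl hxy
  | cons h q => exact ⟨_, h⟩

lemma gdelete_induce_eq {s D : Set V} (h : Disjoint s D) :
    (gdelete G D).induce s = G.induce s := by
  ext a b
  simp only [comap_adj, Function.Embedding.coe_subtype]
  show G.Adj a b ∧ (a : V) ∉ D ∧ (b : V) ∉ D ↔ G.Adj a b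
  exact ⟨fun hh => hh.1, fun hh => ⟨hh, fun hD => h.ne_of_mem a.2 hD rfl,
    fun hD => h.ne_of_mem b.2 hD rfl⟩⟩

section Leaf

variable {v u : V} (hvu : G.neighborSet v = {u})
include hvu

lemma adj_leaf_iff : ∀ x : V, G.Adj v x ↔ x = u := by
  intro x
  have h : x ∈ G.neighborSet v ↔ x = u := by rw [hvu]; exact Set.mem_singleton_iff
  exact h

lemma leaf_ne : u ≠ v := by
  intro h
  have := (adj_leaf_iff hvu u).mpr rfl
  rw [h] at this
  exact G.irrefl this

/-- If `v ∈ s` and `s` contains another vertex and `G.induce s` is connected, then `u ∈ s`. -/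
lemma leaf_nbr_mem {s : Set V} (hv : v ∈ s) {f : V} (hf : f ∈ s) (hfv : f ≠ v)
    (hconn : (G.induce s).Connected) : u ∈ s := by
  have hne : (⟨v, hv⟩ : ↥s) ≠ ⟨f, hf⟩ := by
    intro h
    exact hfv (congrArg Subtype.val h).symm
  obtain ⟨z, hz⟩ := exists_adj_of_reachable hne (hconn.preconnected ⟨v, hv⟩ ⟨f, hf⟩)
  have : G.Adj v (z : V) := hz
  have hzu := (adj_leaf_iff hvu _).mp this
  rw [← hzu]
  exact z.2

/-- Removing the leaf `v` from a connected induced subgraph keeps it connected. -/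
lemma connected_del_leaf {s : Set V} (hv : v ∈ s) (hu : u ∈ s)
    (hconn : (G.induce s).Connected) (hne : (s \ {v}).Nonempty) :
    (G.induce (s \ {v})).Connected := by
  classical
  have hab : ∀ z : ↥s, (G.induce s).Adj ⟨v, hv⟩ z → z = ⟨u, hu⟩ := by
    intro z hz
    exact Subtype.ext ((adj_leaf_iff hvu _).mp hz)
  haveI : Nonempty ↥(s \ {v}) := ⟨⟨hne.choose, hne.choose_spec⟩⟩
  refine ⟨?_⟩
  rintro ⟨x, hx, hxv⟩ ⟨y, hy, hyv⟩
  obtain ⟨p⟩ := hconn.preconnected ⟨x, hx⟩ ⟨y, hy⟩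
  set p' := p.toPath with hp'
  have hpath : p'.1.IsPath := p'.2
  have havoid : (⟨v, hv⟩ : ↥s) ∉ p'.1.support :=
    path_avoids hab hpath
      (by intro h; exact hxv (by simpa using congrArg Subtype.val h))
      (by intro h; exact hyv (by simpa using congrArg Subtype.val h))
  have hsup : ∀ z ∈ p'.1.support, (z : V) ∈ s \ {v} := by
    intro z hzmem
    refine ⟨z.2, ?_⟩
    intro hzv
    exact havoid (by rwa [show z = ⟨v, hv⟩ from Subtype.ext hzv] at hzmem)
  obtain ⟨q, -⟩ := walk_restrict (Set.diff_subset) p'.1 hsup ⟨hx, hxv⟩ ⟨hy, hyv⟩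
  exact ⟨q⟩

/-- Adding the leaf `v` to an acyclic induced subgraph keeps it acyclic. -/
lemma acyclic_insert_leaf {s : Set V} (hv : v ∉ s) (hu : u ∈ s)
    (hac : (G.induce s).IsAcyclic) : (G.induce (insert v s)).IsAcyclic := by
  classical
  intro a c hc
  by_cases hmem : (⟨v, Set.mem_insert v s⟩ : ↥(insert v s)) ∈ c.support
  · have hc' := hc.rotate hmem
    refine no_cycle_through (b := (⟨u, Set.mem_insert_of_mem v hu⟩ : ↥(insert v s))) ?_ hc'
    intro z hz
    exact Subtype.ext ((adj_leaf_iff hvu _).mp hz)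
  · have hsup : ∀ z ∈ c.support, (z : V) ∈ s := by
      intro z hzmem
      rcases z.2 with hzv | hzs
      · exact absurd (by rwa [show z = ⟨v, Set.mem_insert v s⟩ from Subtype.ext hzv] at hzmem)
          hmem
      · exact hzs
    have ha : (a : V) ∈ s := hsup a c.start_mem_support
    obtain ⟨q, hq⟩ := walk_restrict (Set.subset_insert v s) c hsup ha ha
    exact hac q ((Walk.map_isCycle_iff_of_injective
      (G.induceHomOfLE (Set.subset_insert v s)).injective).mp (by rwa [hq]))

/-- Adding the leaf `v` to a connected induced subgraph containing `u` keeps it connected. -/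
lemma connected_insert_leaf {s : Set V} (hu : u ∈ s)
    (hconn : (G.induce s).Connected) : (G.induce (insert v s)).Connected := by
  have hadj : G.Adj v u := (adj_leaf_iff hvu u).mpr rfl
  have h1 : (G.induce {v, u}).Connected := SimpleGraph.induce_pair_connected_of_adj hadj
  have h2 := SimpleGraph.induce_union_connected h1.preconnected hconn.preconnected ⟨u, by simp, hu⟩
  have hset : ({v, u} : Set V) ∪ s = insert v s := by
    ext x
    simp only [Set.mem_union, Set.mem_insert_iff, Set.mem_singleton_iff]
    constructor
    · rintro ((rfl | rfl) | h)
      · exact Or.inl rfl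
      · exact Or.inr hu
      · exact Or.inr h
    · rintro (rfl | h)
      · exact Or.inl (Or.inl rfl)
      · exact Or.inr h
  rwa [hset] at h2

lemma openNbhd_del_of_mem {s : Set V} (hvs : v ∈ s) (hu : u ∈ s) :
    openNbhd (gdelete G {v}) (s \ {v}) = openNbhd G s := by
  ext x
  constructor
  · rintro ⟨hxs, y, ⟨hys, -⟩, hadjxy, hxv, -⟩
    have hxns : x ∉ s := by
      intro hx
      exact hxs ⟨hx, hxv⟩
    exact ⟨hxns, y, hys, hadjxy⟩
  · rintro ⟨hxs, y, hys, hadjxy⟩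
    have hxv : x ≠ v := fun h => hxs (h ▸ hvs)
    have hyv : y ≠ v := by
      rintro rfl
      exact hxs (((adj_leaf_iff hvu x).mp hadjxy.symm) ▸ hu)
    exact ⟨fun h => hxs h.1, y, ⟨hys, hyv⟩, ⟨hadjxy, hxv, hyv⟩⟩

lemma openNbhd_insert_leaf {s : Set V} (hv : v ∉ s) (hu : u ∈ s) :
    openNbhd G (insert v s) = openNbhd G s \ {v} := by
  ext x
  constructor
  · rintro ⟨hxn, y, hy, hadjxy⟩
    have hxv : x ≠ v := fun h => hxn (h ▸ Set.mem_insert v s)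
    have hxs : x ∉ s := fun h => hxn (Set.mem_insert_of_mem v h)
    rcases hy with rfl | hys
    · exact absurd (((adj_leaf_iff hvu x).mp hadjxy.symm) ▸ hu) hxs
    · exact ⟨⟨hxs, y, hys, hadjxy⟩, hxv⟩
  · rintro ⟨⟨hxs, y, hys, hadjxy⟩, hxv⟩
    refine ⟨?_, y, Set.mem_insert_of_mem v hys, hadjxy⟩
    rintro (rfl | h)
    · exact hxv rfl
    · exact hxs h

lemma leaf_not_in_openNbhd {s : Set V} (hu : u ∉ s) : v ∉ openNbhd G s := by
  rintro ⟨hvs, y, hys, hadjvy⟩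
  exact hu (((adj_leaf_iff hvu y).mp hadjvy) ▸ hys)

end Leaf

lemma openNbhd_gdelete {v : V} {s : Set V} (hv : v ∉ s) :
    openNbhd (gdelete G {v}) s = openNbhd G s \ {v} := by
  ext x
  constructor
  · rintro ⟨hxs, y, hys, hadjxy, hxv, hyv⟩
    exact ⟨⟨hxs, y, hys, hadjxy⟩, fun h => hxv h⟩
  · rintro ⟨⟨hxs, y, hys, hadjxy⟩, hxv⟩
    exact ⟨hxs, y, hys, hadjxy, hxv, fun h => hv (h ▸ hys)⟩

section Weights

variable [Finite V] (w : V → ℕ)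

lemma weight_diff_singleton {S : Set V} {a : V} (ha : a ∈ S) :
    weight w S = weight w (S \ {a}) + w a := by
  have hS : S = (S \ {a}) ∪ {a} := by
    rw [Set.diff_union_self, Set.union_eq_self_of_subset_right (Set.singleton_subset_iff.mpr ha)]
  rw [weight]
  conv_lhs => rw [hS]
  rw [finsum_mem_union (Set.disjoint_singleton_right.mpr (by simp))
    (Set.toFinite _) (Set.toFinite _), finsum_mem_singleton]
  rfl

lemma weight_insert {S : Set V} {a : V} (ha : a ∉ S) :
    weight w (insert a S) = weight w S + w a := by
  have h := weight_diff_singleton w (Set.mem_insert a S)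
  rwa [Set.insert_diff_of_mem _ (Set.mem_singleton a), Set.diff_singleton_eq_self ha] at h

lemma weight_congr {w' : V → ℕ} {S : Set V} (h : ∀ x ∈ S, w x = w' x) :
    weight w S = weight w' S :=
  finsum_mem_congr rfl h

lemma weight_shift {w' : V → ℕ} {u v : V} (hw'u : w' u = w u + w v)
    (hw'x : ∀ x : V, x ≠ u → w' x = w x) {S : Set V} (hu : u ∈ S) :
    weight w' S = weight w S + w v := by
  rw [weight_diff_singleton w' hu, weight_diff_singleton w hu,
    weight_congr w' (w' := w) (S := S \ {u}) (fun x hx => hw'x x hx.2), hw'u]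
  omega

lemma weight_shift' {w' : V → ℕ} {u : V} (hw'x : ∀ x : V, x ≠ u → w' x = w x)
    {S : Set V} (hu : u ∉ S) :
    weight w' S = weight w S := by
  refine weight_congr w' fun x hx => hw'x x ?_
  rintro rfl
  exact hu hx

end Weights

end Helpers

/-- contracting a degree-1 vertex `v` (with unique neighbor `u`,
`F ≠ {v}`) preserves existence of `k`-secluded supertrees and the maximum weight:
`secl_G^k(F)` is nonempty iff `secl_{G−v}^k(F')` is, and in that case the maximum
`w`-weight over the former equals the maximum `w'`-weight over the latter. -/
theorem contract_leaf_weight [Fintype V] (G : SimpleGraph V) (w : V → ℕ)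
    (hw : ∀ x : V, 0 < w x) (k : ℕ) (F : Set V) (hF : F.Nonempty)
    (v u : V) (hvu : G.neighborSet v = {u}) (hFv : F ≠ {v})
    (w' : V → ℕ) (hw'u : w' u = w u + w v) (hw'x : ∀ x : V, x ≠ u → w' x = w x)
    (F' : Set V) (hF'mem : v ∈ F → F' = (F \ {v}) ∪ {u}) (hF'nmem : v ∉ F → F' = F) :
    ((secl G k F).Nonempty ↔ {S ∈ secl (gdelete G {v}) k F' | v ∉ S}.Nonempty) ∧
      ((secl G k F).Nonempty →
        sSup (weight w '' secl G k F) =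
          sSup (weight w' '' {S ∈ secl (gdelete G {v}) k F' | v ∉ S})) := by
  classical
  have huv : u ≠ v := leaf_ne hvu
  obtain ⟨f, hfF, hfv⟩ : ∃ f ∈ F, f ≠ v := by
    by_contra h
    push_neg at h
    exact hFv (Set.eq_singleton_iff_nonempty_unique_mem.mpr ⟨hF, h⟩)
  set T : Set (Set V) := {S ∈ secl (gdelete G {v}) k F' | v ∉ S} with hTdef
  -- every element of F different from v belongs to F'
  have hF'sub : ∀ x ∈ F, x ≠ v → x ∈ F' := by
    intro x hx hxv
    by_cases hvF : v ∈ F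
    · rw [hF'mem hvF]
      exact Or.inl ⟨hx, hxv⟩
    · rw [hF'nmem hvF]
      exact hx
  -- Forward direction
  have fwd : ∀ S ∈ secl G k F, (S \ {v}) ∈ T ∧ weight w S ≤ weight w' (S \ {v}) := by
    rintro S ⟨⟨htree, hnb⟩, hFS⟩
    obtain ⟨hconn, hacyc⟩ := htree
    by_cases hvS : v ∈ S
    · -- v ∈ S : remove the leaf
      have hfS : f ∈ S := hFS hfF
      have hu : u ∈ S := leaf_nbr_mem hvu hvS hfS hfv hconn
      have hne : (S \ {v}).Nonempty := ⟨f, hfS, hfv⟩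
      have conn' := connected_del_leaf hvu hvS hu hconn hne
      have acyc' := acyclic_induce_mono (Set.diff_subset (s := S) (t := {v})) hacyc
      have hdisj : Disjoint (S \ {v}) ({v} : Set V) :=
        Set.disjoint_singleton_right.mpr (by simp)
      have tree' : IsInducedTree (gdelete G {v}) (S \ {v}) := by
        rw [IsInducedTree, gdelete_induce_eq hdisj]
        exact ⟨conn', acyc'⟩
      have hnb' : openNbhd (gdelete G {v}) (S \ {v}) = openNbhd G S :=
        openNbhd_del_of_mem hvu hvS hu
      have hF' : F' ⊆ S \ {v} := by
        intro x hx
        by_cases hvF : v ∈ F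
        · rw [hF'mem hvF] at hx
          rcases hx with ⟨hxF, hxv⟩ | hxu
          · exact ⟨hFS hxF, hxv⟩
          · rw [hxu]
            exact ⟨hu, huv⟩
        · rw [hF'nmem hvF] at hx
          refine ⟨hFS hx, ?_⟩
          rintro rfl
          exact hvF hx
      have hmemT : (S \ {v}) ∈ T := by
        refine ⟨⟨⟨tree', ?_⟩, hF'⟩, by simp⟩
        rw [hnb']
        exact hnb
      have hwt : weight w S ≤ weight w' (S \ {v}) := by
        have h1 : weight w' (S \ {v}) = weight w (S \ {v}) + w v :=
          weight_shift w hw'u hw'x ⟨hu, huv⟩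
        have h2 : weight w S = weight w (S \ {v}) + w v := weight_diff_singleton w hvS
        omega
      exact ⟨hmemT, hwt⟩
    · -- v ∉ S : nothing changes
      have hSd : S \ {v} = S := Set.diff_singleton_eq_self hvS
      have hdisj : Disjoint S ({v} : Set V) := Set.disjoint_singleton_right.mpr hvS
      have tree' : IsInducedTree (gdelete G {v}) S := by
        rw [IsInducedTree, gdelete_induce_eq hdisj]
        exact ⟨hconn, hacyc⟩
      have hnb' : (openNbhd (gdelete G {v}) S).ncard ≤ k := by
        rw [openNbhd_gdelete hvS]
        exact le_trans (Set.ncard_le_ncard Set.diff_subset (Set.toFinite _)) hnb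
      have hvF : v ∉ F := fun h => hvS (hFS h)
      have hF' : F' ⊆ S := by
        rw [hF'nmem hvF]
        exact hFS
      have hmemT : (S \ {v}) ∈ T := by
        rw [hSd]
        exact ⟨⟨⟨tree', hnb'⟩, hF'⟩, hvS⟩
      have hwt : weight w S ≤ weight w' (S \ {v}) := by
        rw [hSd]
        by_cases hu : u ∈ S
        · rw [weight_shift w hw'u hw'x hu]
          omega
        · rw [weight_shift' w hw'x hu]
      exact ⟨hmemT, hwt⟩
  -- Backward direction
  have bwd : ∀ S' ∈ T, ∃ S ∈ secl G k F, weight w' S' ≤ weight w S := by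
    rintro S' ⟨⟨⟨htree', hnb'⟩, hF'S'⟩, hvS'⟩
    have hdisj : Disjoint S' ({v} : Set V) := Set.disjoint_singleton_right.mpr hvS'
    rw [IsInducedTree, gdelete_induce_eq hdisj] at htree'
    obtain ⟨hconn', hacyc'⟩ := htree'
    rw [openNbhd_gdelete hvS'] at hnb'
    by_cases hu : u ∈ S'
    · -- add back the leaf
      refine ⟨insert v S', ⟨⟨⟨connected_insert_leaf hvu hu hconn',
          acyclic_insert_leaf hvu hvS' hu hacyc'⟩, ?_⟩, ?_⟩, ?_⟩
      · rw [openNbhd_insert_leaf hvu hvS' hu]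
        exact hnb'
      · intro x hx
        by_cases hxv : x = v
        · rw [hxv]
          exact Set.mem_insert v S'
        · exact Set.mem_insert_of_mem v (hF'S' (hF'sub x hx hxv))
      · rw [weight_insert w hvS', weight_shift w hw'u hw'x hu]
    · -- S' itself works
      have hvnb : v ∉ openNbhd G S' := leaf_not_in_openNbhd hvu hu
      have hnbeq : openNbhd G S' \ {v} = openNbhd G S' := Set.diff_singleton_eq_self hvnb
      refine ⟨S', ⟨⟨⟨⟨hconn', hacyc'⟩, ?_⟩, ?_⟩, ?_⟩⟩
      · rw [← hnbeq]
        exact hnb'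
      · intro x hx
        have hxv : x ≠ v := by
          intro hxveq
          have hvF : v ∈ F := hxveq ▸ hx
          have hu' : u ∈ F' := by
            rw [hF'mem hvF]
            exact Or.inr rfl
          exact hu (hF'S' hu')
        exact hF'S' (hF'sub x hx hxv)
      · rw [weight_shift' w hw'x hu]
  -- Put everything together
  have hbddA : BddAbove (weight w '' secl G k F) :=
    ((Set.toFinite (secl G k F)).image (weight w)).bddAbove
  have hbddB : BddAbove (weight w' '' T) :=
    ((Set.toFinite T).image (weight w')).bddAbove
  constructor
  · constructor
    · rintro ⟨S, hS⟩
      exact ⟨S \ {v}, (fwd S hS).1⟩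
    · rintro ⟨S', hS'⟩
      obtain ⟨S, hS, -⟩ := bwd S' hS'
      exact ⟨S, hS⟩
  · rintro ⟨S₀, hS₀⟩
    have hAne : (weight w '' secl G k F).Nonempty := ⟨weight w S₀, S₀, hS₀, rfl⟩
    have hBne : (weight w' '' T).Nonempty :=
      ⟨weight w' (S₀ \ {v}), S₀ \ {v}, (fwd S₀ hS₀).1, rfl⟩
    apply le_antisymm
    · apply csSup_le hAne
      rintro a ⟨S, hS, rfl⟩
      exact le_trans (fwd S hS).2 (le_csSup hbddB ⟨S \ {v}, (fwd S hS).1, rfl⟩)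
    · apply csSup_le hBne
      rintro b ⟨S', hS', rfl⟩
      obtain ⟨S, hS, hle⟩ := bwd S' hS'
      exact le_trans hle (le_csSup hbddA ⟨S, hS, rfl⟩)

end Secluded
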